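/- For a finite ground set V, the set function f(A) = log det(T + a⁻¹ E_A), where T is positive definite, a > 0, and E_A is the diagonal matrix extended by zeros (i.e., the (n+1)×(n+1) matrix with a⁻¹ diag(1_A) in the top-left n×n block and zeros elsewhere), is submodular: for all A ⊆ B ⊂ V and v ∉ B, f(A ∪ {v}) − f(A) ≥ f(B ∪ {v}) − f(B). -/

import Mathlib

open Matrix

set_option linter.unusedSectionVars false

section Aux

lemma det_fin_one' (inst : DecidableEq (Fin 1)) (X : Matrix (Fin 1) (Fin 1) ℝ) :
    @Matrix.det (Fin 1) inst _ ℝ _ X = X 0 0 := by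
  rw [Subsingleton.elim inst (instDecidableEqFin 1)]
  exact det_fin_one X

variable {m : Type*} [Fintype m] [DecidableEq m]

lemma dot_psd {M : Matrix m m ℝ} (h : M.PosSemidef) (x : m → ℝ) : 0 ≤ x ⬝ᵥ M *ᵥ x := by
  simpa using h.dotProduct_mulVec_nonneg x

lemma dot_symm {M : Matrix m m ℝ} (h : Mᵀ = M) (u v : m → ℝ) : u ⬝ᵥ M *ᵥ v = v ⬝ᵥ M *ᵥ u := by
  rw [dotProduct_mulVec, ← mulVec_transpose, h, dotProduct_comm]

lemma psd_smul {M : Matrix m m ℝ} (h : M.PosSemidef) {c : ℝ} (hc : 0 ≤ c) :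
    (c • M).PosSemidef := by
  refine PosSemidef.of_dotProduct_mulVec_nonneg ?_ fun x => ?_
  · have h1 : Mᴴ = M := h.1
    show (c • M)ᴴ = c • M
    rw [conjTranspose_smul, h1]
    simp
  · rw [smul_mulVec, dotProduct_smul]
    exact smul_nonneg hc (h.dotProduct_mulVec_nonneg x)

lemma inv_entry_pos {M : Matrix m m ℝ} (hM : M.PosDef) (w : m) : 0 < M⁻¹ w w := by
  have h := hM.inv.dotProduct_mulVec_pos (x := Pi.single w 1) (by
    intro h
    have := congrFun h w
    simp [Pi.single_apply] at this)
  simpa [mulVec_single, single_dotProduct] using h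

lemma inv_entry_antitone {P Q : Matrix m m ℝ} (hP : P.PosDef) (hQ : Q.PosDef)
    (hPQ : (Q - P).PosSemidef) (w : m) : Q⁻¹ w w ≤ P⁻¹ w w := by
  have hPsymm : Pᵀ = P := hP.isHermitian
  have hPu : IsUnit P.det := isUnit_iff_ne_zero.mpr hP.det_pos.ne'
  have hQu : IsUnit Q.det := isUnit_iff_ne_zero.mpr hQ.det_pos.ne'
  set x : m → ℝ := Pi.single w 1 with hx
  set y : m → ℝ := Q⁻¹ *ᵥ x with hy
  set z : m → ℝ := y - P⁻¹ *ᵥ x with hz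
  have h1 : 0 ≤ z ⬝ᵥ P *ᵥ z := dot_psd hP.posSemidef z
  have h2 : 0 ≤ y ⬝ᵥ (Q - P) *ᵥ y := dot_psd hPQ y
  have hQy : Q *ᵥ y = x := by
    rw [hy, mulVec_mulVec, mul_nonsing_inv _ hQu, one_mulVec]
  have hPPinv : P *ᵥ (P⁻¹ *ᵥ x) = x := by
    rw [mulVec_mulVec, mul_nonsing_inv _ hPu, one_mulVec]
  have e1 : z ⬝ᵥ P *ᵥ z = y ⬝ᵥ P *ᵥ y - 2 * (y ⬝ᵥ x) + x ⬝ᵥ P⁻¹ *ᵥ x := by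
    rw [hz, mulVec_sub, dotProduct_sub, sub_dotProduct, sub_dotProduct, hPPinv]
    have h3 : (P⁻¹ *ᵥ x) ⬝ᵥ P *ᵥ y = y ⬝ᵥ x := by
      rw [dot_symm hPsymm, hPPinv]
    have h4 : (P⁻¹ *ᵥ x) ⬝ᵥ x = x ⬝ᵥ P⁻¹ *ᵥ x := dotProduct_comm _ _
    rw [h3, h4]; ring
  have e2 : y ⬝ᵥ (Q - P) *ᵥ y = y ⬝ᵥ x - y ⬝ᵥ P *ᵥ y := by
    rw [sub_mulVec, dotProduct_sub, hQy]
  have e3 : y ⬝ᵥ x = x ⬝ᵥ Q⁻¹ *ᵥ x := by rw [hy, dotProduct_comm]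
  have hxQ : x ⬝ᵥ Q⁻¹ *ᵥ x = Q⁻¹ w w := by
    simp [hx, mulVec_single, single_dotProduct]
  have hxP : x ⬝ᵥ P⁻¹ *ᵥ x = P⁻¹ w w := by
    simp [hx, mulVec_single, single_dotProduct]
  rw [← hxQ, ← hxP]
  linarith [h1, h2, e1, e2, e3]

lemma det_add_smul_single {M : Matrix m m ℝ} (hM : M.PosDef) (c : ℝ) (w : m) :
    (M + c • Matrix.single w w 1).det = M.det * (1 + c * M⁻¹ w w) := by
  have hMu : IsUnit M.det := isUnit_iff_ne_zero.mpr hM.det_pos.ne'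
  have key : c • Matrix.single w w (1:ℝ) =
      replicateCol (Fin 1) (fun i => if i = w then c else 0) *
        replicateRow (Fin 1) (fun i => if i = w then (1:ℝ) else 0) := by
    ext i j
    simp only [Matrix.smul_apply, Matrix.single, of_apply, smul_eq_mul, Matrix.mul_apply,
      replicateCol_apply, replicateRow_apply, Finset.univ_unique, Finset.sum_const, Finset.card_singleton, one_smul]
    split_ifs <;> simp_all
  erw [key, det_add_replicateCol_mul_replicateRow hMu, det_fin_one']
  congr 1
  simp [Matrix.mul_apply, Finset.sum_ite_eq, Finset.sum_ite_eq']
  ring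

end Aux

/-- The `(n+1)×(n+1)` diagonal 0/1 indicator matrix of `A ⊆ {1,…,n}` extended by a zero row/column. -/
def extIndicator {n : ℕ} (A : Finset (Fin n)) : Matrix (Fin (n + 1)) (Fin (n + 1)) ℝ :=
  Matrix.diagonal (fun i => if i ∈ A.image Fin.castSucc then (1 : ℝ) else 0)

lemma extIndicator_posSemidef {n : ℕ} (A : Finset (Fin n)) : (extIndicator A).PosSemidef := by
  refine Matrix.posSemidef_diagonal_iff.mpr fun i => ?_
  split_ifs <;> norm_num

lemma extIndicator_sub_posSemidef {n : ℕ} {A B : Finset (Fin n)} (hAB : A ⊆ B) :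
    (extIndicator B - extIndicator A).PosSemidef := by
  rw [extIndicator, extIndicator, diagonal_sub]
  refine Matrix.posSemidef_diagonal_iff.mpr fun i => ?_
  have him : A.image Fin.castSucc ⊆ B.image Fin.castSucc := Finset.image_subset_image hAB
  by_cases hA : i ∈ A.image Fin.castSucc
  · simp [hA, him hA]
  · simp only [Pi.sub_apply, if_neg hA]
    split_ifs <;> norm_num

lemma extIndicator_insert {n : ℕ} {A : Finset (Fin n)} {v : Fin n} (hv : v ∉ A) :
    extIndicator (insert v A) =
      extIndicator A + Matrix.single v.castSucc v.castSucc 1 := by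
  have hw : (v.castSucc : Fin (n+1)) ∉ A.image Fin.castSucc := by
    simp only [Finset.mem_image, not_exists]
    rintro x ⟨hx, h⟩
    exact hv ((Fin.castSucc_injective n h) ▸ hx)
  ext i j
  by_cases hij : i = j
  · subst hij
    simp only [extIndicator, Finset.image_insert, diagonal_apply_eq, Matrix.add_apply,
      Matrix.single, of_apply, Finset.mem_insert]
    by_cases hi : i = v.castSucc
    · subst hi
      simp [hw]
    · simp [hi, Ne.symm hi]
  · simp only [extIndicator, diagonal_apply_ne _ hij, Matrix.add_apply, Matrix.single, of_apply]
    rw [if_neg, add_zero]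
    rintro ⟨h1, h2⟩
    exact hij (h1.symm.trans h2)

theorem logdet_submodular {n : ℕ} (T : Matrix (Fin (n + 1)) (Fin (n + 1)) ℝ) (a : ℝ)
    (ha : 0 < a) (hT : T.PosDef) :
    ∀ A B : Finset (Fin n), A ⊆ B → ∀ v ∉ B,
      Real.log (T + a⁻¹ • extIndicator (insert v B)).det -
        Real.log (T + a⁻¹ • extIndicator B).det ≤
      Real.log (T + a⁻¹ • extIndicator (insert v A)).det -
        Real.log (T + a⁻¹ • extIndicator A).det := by
  intro A B hAB v hvB
  have hvA : v ∉ A := fun h => hvB (hAB h)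
  have hc : (0:ℝ) < a⁻¹ := inv_pos.mpr ha
  set w : Fin (n+1) := v.castSucc
  set MA : Matrix (Fin (n+1)) (Fin (n+1)) ℝ := T + a⁻¹ • extIndicator A with hMA
  set MB : Matrix (Fin (n+1)) (Fin (n+1)) ℝ := T + a⁻¹ • extIndicator B with hMB
  have hMApd : MA.PosDef := hT.add_posSemidef (psd_smul (extIndicator_posSemidef A) hc.le)
  have hMBpd : MB.PosDef := hT.add_posSemidef (psd_smul (extIndicator_posSemidef B) hc.le)
  have hsub : (MB - MA).PosSemidef := by
    have : MB - MA = a⁻¹ • (extIndicator B - extIndicator A) := by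
      rw [hMA, hMB, smul_sub]; abel
    rw [this]
    exact psd_smul (extIndicator_sub_posSemidef hAB) hc.le
  -- rewrite insertions
  have hEA : T + a⁻¹ • extIndicator (insert v A) = MA + a⁻¹ • Matrix.single w w 1 := by
    rw [extIndicator_insert hvA, smul_add, hMA]; abel
  have hEB : T + a⁻¹ • extIndicator (insert v B) = MB + a⁻¹ • Matrix.single w w 1 := by
    rw [extIndicator_insert hvB, smul_add, hMB]; abel
  have hinvA : 0 < MA⁻¹ w w := inv_entry_pos hMApd w
  have hinvB : 0 < MB⁻¹ w w := inv_entry_pos hMBpd w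
  have hdiff : ∀ (M : Matrix (Fin (n+1)) (Fin (n+1)) ℝ), M.PosDef → 0 < M⁻¹ w w →
      Real.log (M + a⁻¹ • Matrix.single w w 1).det - Real.log M.det =
        Real.log (1 + a⁻¹ * M⁻¹ w w) := by
    intro M hM hMw
    rw [det_add_smul_single hM, Real.log_mul hM.det_pos.ne'
      (by positivity), add_sub_cancel_left]
  rw [hEA, hEB, hdiff MA hMApd hinvA, hdiff MB hMBpd hinvB]
  have hle : MB⁻¹ w w ≤ MA⁻¹ w w := inv_entry_antitone hMApd hMBpd hsub w
  apply Real.log_le_log (by positivity)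
  nlinarith
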